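/- Let A be the 2×2 matrix of indeterminates and d ≥ 1. If all the generators of J_{d,2} vanish (equivalently det(D(f)) = 1 identically), then in the quotient ring R/J_{d,2}, for every u₀ ∈ {1,2} and every (2(d−1))-tuple of indices, the product Σ_{w} a_{u₀,w} a_{w,u₂} Π_j a_{u₀,ν(1,j)} a_{w,ν(2,j)} equals 0; in particular, every monomial of the form a_{u₀,w₁}a_{w₁,w₂}·(product of 2(d−1) further entries from rows u₀ and w₁) arising as a tree weight of height ≥ 2 maps to 0 in R/J_{d,2}. -/

import Mathlib

open Finset MvPolynomial

/-- The coefficient ring `R = ℚ[a_{1,1}, a_{1,2}, a_{2,1}, a_{2,2}]`. -/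
abbrev Rring : Type := MvPolynomial (Fin 2 × Fin 2) ℚ

/-- The indeterminate `a_{i,j}`. -/
noncomputable def aa (i j : Fin 2) : Rring := MvPolynomial.X (i, j)

/-- The Jacobian matrix `D(f)` of the `d`-linear map
`f_i = x_i − (t(a_{i,1}x₁ + a_{i,2}x₂))^d`, as a matrix over `R[t, x₁, x₂]`
(variable `0` is `t`, variables `1, 2` are `x₁, x₂`):
`(D f)_{i,k} = δ_{i,k} − t·d·a_{i,k}·(t(a_{i,1}x₁+a_{i,2}x₂))^{d−1}`. -/
noncomputable def Df (d : ℕ) : Matrix (Fin 2) (Fin 2) (MvPolynomial (Fin 3) Rring) :=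
  Matrix.of fun i k =>
    (if i = k then 1 else 0) -
      (d : MvPolynomial (Fin 3) Rring) * X 0 * C (aa i k) *
        (X 0 * (C (aa i 0) * X 1 + C (aa i 1) * X 2)) ^ (d - 1)

/-- The ideal `J_{d,2} ⊆ R` generated by the coefficients of all nonconstant
monomials (in `t, x₁, x₂`) of the Jacobian determinant `det(D f)`. -/
noncomputable def Jideal (d : ℕ) : Ideal Rring :=
  Ideal.span ((fun m => MvPolynomial.coeff m (Df d).det) '' {m | m ≠ 0})


noncomputable def TT (a b c : ℕ) : Fin 3 →₀ ℕ :=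
  Finsupp.single 0 a + Finsupp.single 1 b + Finsupp.single 2 c

lemma TT_apply0 (a b c : ℕ) : TT a b c 0 = a := by
  simp [TT, Finsupp.single_apply]
lemma TT_apply1 (a b c : ℕ) : TT a b c 1 = b := by
  simp [TT, Finsupp.single_apply]
lemma TT_apply2 (a b c : ℕ) : TT a b c 2 = c := by
  simp [TT, Finsupp.single_apply]

lemma TT_inj {a b c a' b' c' : ℕ} : TT a b c = TT a' b' c' ↔ a = a' ∧ b = b' ∧ c = c' := by
  constructor
  · intro h
    refine ⟨?_, ?_, ?_⟩
    · have := DFunLike.congr_fun h 0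
      simpa [TT_apply0] using this
    · have := DFunLike.congr_fun h 1
      simpa [TT_apply1] using this
    · have := DFunLike.congr_fun h 2
      simpa [TT_apply2] using this
  · rintro ⟨rfl, rfl, rfl⟩; rfl

lemma TT_ne_zero {a b c : ℕ} (h : a ≠ 0) : TT a b c ≠ 0 := by
  intro hh
  have := DFunLike.congr_fun hh 0
  simp [TT_apply0] at this
  exact h this

lemma TT_add (a b c a' b' c' : ℕ) : TT a b c + TT a' b' c' = TT (a+a') (b+b') (c+c') := by
  ext i
  fin_cases i <;> simp [TT, Finsupp.single_apply]

lemma mono_eq (a b c : ℕ) (r : Rring) :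
    (C r : MvPolynomial (Fin 3) Rring) * X 0 ^ a * X 1 ^ b * X 2 ^ c
      = monomial (TT a b c) r := by
  rw [X_pow_eq_monomial, X_pow_eq_monomial, X_pow_eq_monomial, C_apply,
    monomial_mul, monomial_mul, monomial_mul, TT]
  simp

lemma entry_exp (e : ℕ) (r s : Rring) :
    (X 0 : MvPolynomial (Fin 3) Rring) * (X 0 * (C r * X 1 + C s * X 2)) ^ e
      = ∑ k ∈ range (e+1), monomial (TT (e+1) k (e-k)) ((e.choose k : Rring) * (r^k * s^(e-k))) := by
  have h : (X 0 : MvPolynomial (Fin 3) Rring) * (X 0 * (C r * X 1 + C s * X 2)) ^ e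
      = X 0 ^ (e+1) * (C r * X 1 + C s * X 2) ^ e := by
    rw [mul_pow]; ring
  rw [h, add_pow, Finset.mul_sum]
  refine Finset.sum_congr rfl fun k hk => ?_
  rw [← mono_eq]
  simp only [map_mul, map_pow, map_natCast, mul_pow]
  ring

lemma det_exp (e : ℕ) :
    (Df (e+1)).det =
      1 - ∑ k ∈ range (e+1), monomial (TT (e+1) k (e-k))
            ((e+1 : Rring) * (e.choose k : Rring) *
              (aa 0 0 ^ (k+1) * aa 0 1 ^ (e-k) + aa 1 0 ^ k * aa 1 1 ^ (e-k+1)))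
        + ∑ k ∈ range (e+1), ∑ l ∈ range (e+1),
            monomial (TT (2*e+2) (k+l) (2*e-k-l))
              ((e+1 : Rring)^2 * (e.choose k : Rring) * (e.choose l : Rring) *
                ((aa 0 0 * aa 1 1 - aa 0 1 * aa 1 0) *
                  (aa 0 0 ^ k * aa 0 1 ^ (e-k) * aa 1 0 ^ l * aa 1 1 ^ (e-l)))) := by
  have hS : ∀ r s : Rring, (X 0 : MvPolynomial (Fin 3) Rring) * (X 0 * (C r * X 1 + C s * X 2)) ^ e
      = ∑ k ∈ range (e+1), monomial (TT (e+1) k (e-k)) ((e.choose k : Rring) * (r^k * s^(e-k))) :=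
    entry_exp e
  have h1 : (Df (e+1)).det =
      1 - ((e+1 : MvPolynomial (Fin 3) Rring) * C (aa 0 0) *
            (X 0 * (X 0 * (C (aa 0 0) * X 1 + C (aa 0 1) * X 2)) ^ e)
          + (e+1 : MvPolynomial (Fin 3) Rring) * C (aa 1 1) *
            (X 0 * (X 0 * (C (aa 1 0) * X 1 + C (aa 1 1) * X 2)) ^ e))
        + (e+1 : MvPolynomial (Fin 3) Rring)^2 *
            ((C (aa 0 0) * C (aa 1 1) - C (aa 0 1) * C (aa 1 0)) *
              ((X 0 * (X 0 * (C (aa 0 0) * X 1 + C (aa 0 1) * X 2)) ^ e) *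
               (X 0 * (X 0 * (C (aa 1 0) * X 1 + C (aa 1 1) * X 2)) ^ e))) := by
    rw [Matrix.det_fin_two]
    simp only [Df, Matrix.of_apply, Nat.add_sub_cancel]
    norm_num
    ring
  have hC : ((e : MvPolynomial (Fin 3) Rring) + 1) = C ((e : Rring) + 1) := by
    rw [map_add, map_natCast, map_one]
  have hC2 : ((e : MvPolynomial (Fin 3) Rring) + 1)^2 = C (((e : Rring) + 1)^2) := by
    rw [map_pow, hC]
  have hCdet : (C (aa 0 0) * C (aa 1 1) - C (aa 0 1) * C (aa 1 0) : MvPolynomial (Fin 3) Rring)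
      = C (aa 0 0 * aa 1 1 - aa 0 1 * aa 1 0) := by
    simp only [← map_mul, ← map_sub]
  rw [h1, hS, hS, hCdet, hC, ← map_pow]
  congr 1
  · congr 1
    simp only [Finset.mul_sum]
    rw [← Finset.sum_add_distrib]
    refine Finset.sum_congr rfl fun k hk => ?_
    simp only [mul_assoc, C_mul_monomial]
    rw [← map_add]
    congr 1
    push_cast
    ring
  · rw [Finset.sum_mul_sum]
    simp only [Finset.mul_sum]
    refine Finset.sum_congr rfl fun k hk => ?_
    refine Finset.sum_congr rfl fun l hl => ?_
    have hk' : k ≤ e := Nat.lt_succ_iff.mp (Finset.mem_range.mp hk)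
    have hl' : l ≤ e := Nat.lt_succ_iff.mp (Finset.mem_range.mp hl)
    rw [monomial_mul, TT_add]
    rw [show (e+1)+(e+1) = 2*e+2 by ring, show (e-k)+(e-l) = 2*e-k-l by omega]
    simp only [C_mul_monomial]
    refine congrArg (monomial _) ?_
    push_cast
    ring

lemma coeff_det_1 (e k : ℕ) (hk : k ≤ e) :
    coeff (TT (e+1) k (e-k)) (Df (e+1)).det
      = -((e+1 : Rring) * (e.choose k : Rring) *
          (aa 0 0 ^ (k+1) * aa 0 1 ^ (e-k) + aa 1 0 ^ k * aa 1 1 ^ (e-k+1))) := by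
  rw [det_exp]
  simp only [coeff_add, coeff_sub, coeff_sum]
  have h1 : coeff (TT (e+1) k (e-k)) (1 : MvPolynomial (Fin 3) Rring) = 0 := by
    rw [coeff_one, if_neg]
    exact fun h => TT_ne_zero (Nat.succ_ne_zero e) h.symm
  have h2 : ∑ k' ∈ range (e+1), coeff (TT (e+1) k (e-k))
      (monomial (TT (e+1) k' (e-k'))
        ((e+1 : Rring) * (e.choose k' : Rring) *
          (aa 0 0 ^ (k'+1) * aa 0 1 ^ (e-k') + aa 1 0 ^ k' * aa 1 1 ^ (e-k'+1))))
      = (e+1 : Rring) * (e.choose k : Rring) *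
          (aa 0 0 ^ (k+1) * aa 0 1 ^ (e-k) + aa 1 0 ^ k * aa 1 1 ^ (e-k+1)) := by
    rw [Finset.sum_eq_single_of_mem k (Finset.mem_range.mpr (Nat.lt_succ_of_le hk))]
    · rw [coeff_monomial, if_pos rfl]
    · intro k' _ hne
      rw [coeff_monomial, if_neg]
      intro h
      exact hne (TT_inj.mp h).2.1
  have h3 : ∀ k' ∈ range (e+1), ∑ l ∈ range (e+1), coeff (TT (e+1) k (e-k))
      (monomial (TT (2*e+2) (k'+l) (2*e-k'-l))
        ((e+1 : Rring)^2 * (e.choose k' : Rring) * (e.choose l : Rring) *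
          ((aa 0 0 * aa 1 1 - aa 0 1 * aa 1 0) *
            (aa 0 0 ^ k' * aa 0 1 ^ (e-k') * aa 1 0 ^ l * aa 1 1 ^ (e-l))))) = 0 := by
    intro k' _
    refine Finset.sum_eq_zero fun l _ => ?_
    rw [coeff_monomial, if_neg]
    intro h
    have := (TT_inj.mp h).1
    omega
  rw [h1, h2, Finset.sum_congr rfl h3, Finset.sum_const, smul_zero]
  ring

lemma coeff_det_2 (e : ℕ) :
    coeff (TT (2*e+2) e e) (Df (e+1)).det
      = ∑ k ∈ range (e+1),
          (e+1 : Rring)^2 * (e.choose k : Rring) * (e.choose (e-k) : Rring) *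
            ((aa 0 0 * aa 1 1 - aa 0 1 * aa 1 0) *
              (aa 0 0 ^ k * aa 0 1 ^ (e-k) * aa 1 0 ^ (e-k) * aa 1 1 ^ (e-(e-k)))) := by
  rw [det_exp]
  simp only [coeff_add, coeff_sub, coeff_sum]
  have h1 : coeff (TT (2*e+2) e e) (1 : MvPolynomial (Fin 3) Rring) = 0 := by
    rw [coeff_one, if_neg]
    exact fun h => TT_ne_zero (by omega) h.symm
  have h2 : ∀ k' ∈ range (e+1), coeff (TT (2*e+2) e e)
      (monomial (TT (e+1) k' (e-k'))
        ((e+1 : Rring) * (e.choose k' : Rring) *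
          (aa 0 0 ^ (k'+1) * aa 0 1 ^ (e-k') + aa 1 0 ^ k' * aa 1 1 ^ (e-k'+1)))) = 0 := by
    intro k' _
    rw [coeff_monomial, if_neg]
    intro h
    have := (TT_inj.mp h).1
    omega
  rw [h1, Finset.sum_congr rfl h2, Finset.sum_const, smul_zero]
  rw [zero_sub, neg_zero, zero_add]
  refine Finset.sum_congr rfl fun k hk => ?_
  have hk' : k ≤ e := Nat.lt_succ_iff.mp (Finset.mem_range.mp hk)
  rw [Finset.sum_eq_single_of_mem (e-k) (Finset.mem_range.mpr (by omega))]
  · rw [coeff_monomial, if_pos]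
    rw [show k + (e-k) = e by omega, show 2*e-k-(e-k) = e by omega]
  · intro l _ hne
    rw [coeff_monomial, if_neg]
    intro h
    have h2 := (TT_inj.mp h).2.1
    omega

lemma G_mem (e k : ℕ) (hk : k ≤ e) :
    aa 0 0 ^ (k+1) * aa 0 1 ^ (e-k) + aa 1 0 ^ k * aa 1 1 ^ (e-k+1) ∈ Jideal (e+1) := by
  have hmem : coeff (TT (e+1) k (e-k)) (Df (e+1)).det ∈ Jideal (e+1) :=
    Ideal.subset_span ⟨TT (e+1) k (e-k), TT_ne_zero (Nat.succ_ne_zero e), rfl⟩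
  set c : ℚ := ((e : ℚ) + 1) * (e.choose k : ℚ) with hcdef
  have hc : c ≠ 0 := by
    refine mul_ne_zero (by positivity) ?_
    exact_mod_cast (Nat.choose_pos hk).ne'
  have hCc : ((e : Rring) + 1) * (e.choose k : Rring) = C c := by
    rw [hcdef, map_mul, map_add, map_one, map_natCast, map_natCast]
  have hcc : (C (-c⁻¹) : Rring) * C (-c) = 1 := by
    rw [← map_mul, neg_mul_neg, inv_mul_cancel₀ hc, map_one]
  have key : C (-c⁻¹) * coeff (TT (e+1) k (e-k)) (Df (e+1)).det
      = aa 0 0 ^ (k+1) * aa 0 1 ^ (e-k) + aa 1 0 ^ k * aa 1 1 ^ (e-k+1) := by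
    rw [coeff_det_1 e k hk]
    have h2 : (-((e+1 : Rring) * (e.choose k : Rring) *
        (aa 0 0 ^ (k+1) * aa 0 1 ^ (e-k) + aa 1 0 ^ k * aa 1 1 ^ (e-k+1))))
        = C (-c) * (aa 0 0 ^ (k+1) * aa 0 1 ^ (e-k) + aa 1 0 ^ k * aa 1 1 ^ (e-k+1)) := by
      rw [map_neg, ← hCc]; ring
    rw [h2, ← mul_assoc, hcc, one_mul]
  rw [← key]
  exact Ideal.mul_mem_left _ _ hmem

lemma H_mem (e : ℕ) :
    (∑ k ∈ range (e+1),
        (e.choose k : Rring) * (e.choose (e-k) : Rring) *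
          ((aa 0 0 * aa 1 1 - aa 0 1 * aa 1 0) *
            (aa 0 0 ^ k * aa 0 1 ^ (e-k) * aa 1 0 ^ (e-k) * aa 1 1 ^ (e-(e-k)))))
      ∈ Jideal (e+1) := by
  have hmem : coeff (TT (2*e+2) e e) (Df (e+1)).det ∈ Jideal (e+1) :=
    Ideal.subset_span ⟨TT (2*e+2) e e, TT_ne_zero (by omega), rfl⟩
  set c : ℚ := ((e : ℚ) + 1)^2 with hcdef
  have hc : c ≠ 0 := by positivity
  have hCc : ((e : Rring) + 1)^2 = C c := by
    rw [hcdef, map_pow, map_add, map_one, map_natCast]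
  have hcc : (C (c⁻¹) : Rring) * C c = 1 := by
    rw [← map_mul, inv_mul_cancel₀ hc, map_one]
  have key : C (c⁻¹) * coeff (TT (2*e+2) e e) (Df (e+1)).det
      = ∑ k ∈ range (e+1),
          (e.choose k : Rring) * (e.choose (e-k) : Rring) *
            ((aa 0 0 * aa 1 1 - aa 0 1 * aa 1 0) *
              (aa 0 0 ^ k * aa 0 1 ^ (e-k) * aa 1 0 ^ (e-k) * aa 1 1 ^ (e-(e-k)))) := by
    rw [coeff_det_2, Finset.mul_sum]
    refine Finset.sum_congr rfl fun k hk => ?_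
    rw [hCc]
    linear_combination ((e.choose k : Rring) * (e.choose (e-k) : Rring) *
      ((aa 0 0 * aa 1 1 - aa 0 1 * aa 1 0) *
        (aa 0 0 ^ k * aa 0 1 ^ (e-k) * aa 1 0 ^ (e-k) * aa 1 1 ^ (e-(e-k))))) * hcc
  rw [← key]
  exact Ideal.mul_mem_left _ _ hmem

noncomputable def bb (e : ℕ) (i j : Fin 2) : Rring ⧸ Jideal (e+1) :=
  Ideal.Quotient.mk _ (aa i j)

lemma relG (e x y : ℕ) (h : x + y = e) :
    bb e 0 0 ^ (x+1) * bb e 0 1 ^ y + bb e 1 0 ^ x * bb e 1 1 ^ (y+1) = 0 := by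
  have hm := G_mem e x (by omega)
  have h0 : Ideal.Quotient.mk (Jideal (e+1))
      (aa 0 0 ^ (x+1) * aa 0 1 ^ (e-x) + aa 1 0 ^ x * aa 1 1 ^ (e-x+1)) = 0 :=
    Ideal.Quotient.eq_zero_iff_mem.mpr hm
  have hy : e - x = y := by omega
  rw [hy] at h0
  simpa only [map_add, map_mul, map_pow, bb] using h0

lemma lemA1 (e x y z w : ℕ) (hxy : x + y = e) (hzw : z + w = e) (hx : 1 ≤ x) :
    (bb e 0 0 * bb e 1 1 - bb e 0 1 * bb e 1 0) *
      (bb e 0 0 ^ x * bb e 0 1 ^ y * bb e 1 0 ^ z * bb e 1 1 ^ w) = 0 := by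
  obtain ⟨x', rfl⟩ : ∃ x', x = x' + 1 := ⟨x - 1, by omega⟩
  have h1 := relG e (x'+1) y (by omega)
  have h2 := relG e x' (y+1) (by omega)
  linear_combination (bb e 1 1 ^ (w+1) * bb e 1 0 ^ z) * h1
    - (bb e 1 0 ^ (z+1) * bb e 1 1 ^ w) * h2

lemma lemA2 (e x y z w : ℕ) (hxy : x + y = e) (hzw : z + w = e) (hw : 1 ≤ w) :
    (bb e 0 0 * bb e 1 1 - bb e 0 1 * bb e 1 0) *
      (bb e 0 0 ^ x * bb e 0 1 ^ y * bb e 1 0 ^ z * bb e 1 1 ^ w) = 0 := by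
  obtain ⟨w', rfl⟩ : ∃ w', w = w' + 1 := ⟨w - 1, by omega⟩
  have h1 := relG e z (w'+1) (by omega)
  have h2 := relG e (z+1) w' (by omega)
  linear_combination (bb e 0 0 ^ (x+1) * bb e 0 1 ^ y) * h1
    - (bb e 0 0 ^ x * bb e 0 1 ^ (y+1)) * h2

lemma lemA3 (e : ℕ) :
    (bb e 0 0 * bb e 1 1 - bb e 0 1 * bb e 1 0) * (bb e 0 1 ^ e * bb e 1 0 ^ e) = 0 := by
  have h0 : Ideal.Quotient.mk (Jideal (e+1))
      (∑ k ∈ range (e+1),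
        (e.choose k : Rring) * (e.choose (e-k) : Rring) *
          ((aa 0 0 * aa 1 1 - aa 0 1 * aa 1 0) *
            (aa 0 0 ^ k * aa 0 1 ^ (e-k) * aa 1 0 ^ (e-k) * aa 1 1 ^ (e-(e-k))))) = 0 :=
    Ideal.Quotient.eq_zero_iff_mem.mpr (H_mem e)
  rw [map_sum] at h0
  have h1 : ∑ k ∈ range (e+1), Ideal.Quotient.mk (Jideal (e+1))
      ((e.choose k : Rring) * (e.choose (e-k) : Rring) *
        ((aa 0 0 * aa 1 1 - aa 0 1 * aa 1 0) *
          (aa 0 0 ^ k * aa 0 1 ^ (e-k) * aa 1 0 ^ (e-k) * aa 1 1 ^ (e-(e-k)))))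
      = (bb e 0 0 * bb e 1 1 - bb e 0 1 * bb e 1 0) * (bb e 0 1 ^ e * bb e 1 0 ^ e) := by
    rw [Finset.sum_eq_single_of_mem 0 (Finset.mem_range.mpr (by omega))]
    · simp only [Nat.choose_zero_right, Nat.sub_zero, Nat.choose_self, Nat.cast_one,
        Nat.sub_self, pow_zero, map_mul, map_sub, map_pow, map_one, bb]
      ring
    · intro k hk hkne
      have hk' : k ≤ e := Nat.lt_succ_iff.mp (Finset.mem_range.mp hk)
      have hz := lemA1 e k (e-k) (e-k) (e-(e-k)) (by omega) (by omega) (by omega)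
      simp only [bb] at hz
      simp only [map_mul, map_sub, map_pow, map_natCast]
      linear_combination ((e.choose k : Rring ⧸ Jideal (e+1)) * (e.choose (e-k) : Rring ⧸ Jideal (e+1))) * hz
  rw [h1] at h0
  exact h0

lemma lemB (e x y z w : ℕ) (hxy : x + y = e) (hzw : z + w = e) :
    (bb e 0 0 * bb e 1 1 - bb e 0 1 * bb e 1 0) *
      (bb e 0 0 ^ x * bb e 0 1 ^ y * bb e 1 0 ^ z * bb e 1 1 ^ w) = 0 := by
  rcases Nat.eq_zero_or_pos x with hx | hx
  · rcases Nat.eq_zero_or_pos w with hw | hw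
    · have h3 := lemA3 e
      have hy : y = e := by omega
      have hz2 : z = e := by omega
      rw [hx, hw, hy, hz2]
      linear_combination h3
    · exact lemA2 e x y z w hxy hzw hw
  · exact lemA1 e x y z w hxy hzw hx

lemma lemM0 (e k0 k1 m0 m1 : ℕ) (hk : k0 + k1 = e) (hm : m0 + m1 = e + 1) :
    bb e 0 0 ^ k0 * bb e 0 1 ^ k1 *
      (bb e 0 0 * (bb e 0 0 ^ m0 * bb e 0 1 ^ m1) +
       bb e 0 1 * (bb e 1 0 ^ m0 * bb e 1 1 ^ m1)) = 0 := by
  rcases Nat.eq_zero_or_pos m1 with hm1 | hm1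
  · subst hm1
    obtain rfl : m0 = e + 1 := by omega
    have hG := relG e e 0 (by omega)
    have hB := lemB e k0 k1 e 0 hk (by omega)
    linear_combination (bb e 0 0 ^ k0 * bb e 0 1 ^ k1 * bb e 0 0) * hG - hB
  · obtain ⟨m1', rfl⟩ : ∃ m1', m1 = m1' + 1 := ⟨m1 - 1, by omega⟩
    have h := relG e m0 m1' (by omega)
    linear_combination (bb e 0 0 ^ k0 * bb e 0 1 ^ k1 * bb e 0 1) * h

lemma lemM1 (e k0 k1 m0 m1 : ℕ) (hk : k0 + k1 = e) (hm : m0 + m1 = e + 1) :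
    bb e 1 0 ^ k0 * bb e 1 1 ^ k1 *
      (bb e 1 0 * (bb e 0 0 ^ m0 * bb e 0 1 ^ m1) +
       bb e 1 1 * (bb e 1 0 ^ m0 * bb e 1 1 ^ m1)) = 0 := by
  rcases Nat.eq_zero_or_pos m0 with hm0 | hm0
  · subst hm0
    obtain rfl : m1 = e + 1 := by omega
    have hG := relG e 0 e (by omega)
    have hB := lemB e 0 e k0 k1 (by omega) hk
    linear_combination (bb e 1 0 ^ k0 * bb e 1 1 ^ k1 * bb e 1 1) * hG - hB
  · obtain ⟨m0', rfl⟩ : ∃ m0', m0 = m0' + 1 := ⟨m0 - 1, by omega⟩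
    have h := relG e m0' m1 (by omega)
    linear_combination (bb e 1 0 ^ (k0+1) * bb e 1 1 ^ k1) * h

lemma prod_aa (n : ℕ) (ν' : Fin n → Fin 2) :
    ∃ c0 c1, c0 + c1 = n ∧ ∀ i : Fin 2, ∏ j, aa i (ν' j) = aa i 0 ^ c0 * aa i 1 ^ c1 := by
  refine ⟨(univ.filter fun j => ν' j = 0).card, (univ.filter fun j => ¬(ν' j = 0)).card, ?_, ?_⟩
  · rw [Finset.card_filter_add_card_filter_not]
    simp
  · intro i
    rw [← Finset.prod_filter_mul_prod_filter_not univ (fun j => ν' j = 0)]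
    congr 1
    · rw [Finset.prod_congr rfl (fun j hj => ?_), Finset.prod_const]
      rw [(Finset.mem_filter.mp hj).2]
    · rw [Finset.prod_congr rfl (fun j hj => ?_), Finset.prod_const]
      have h1 : ν' j = 1 := by
        have := (Finset.mem_filter.mp hj).2
        revert this
        exact (by decide : ∀ x : Fin 2, ¬(x = 0) → x = 1) (ν' j)
      rw [h1]

theorem fern_element_zero_in_quotient (d : ℕ) (hd : 1 ≤ d)
    (u₀ u₂ : Fin 2) (ν : Fin 2 → Fin (d - 1) → Fin 2) :
    Ideal.Quotient.mk (Jideal d)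
        (∑ w : Fin 2, aa u₀ w * aa w u₂ * ∏ j, aa u₀ (ν 0 j) * aa w (ν 1 j)) = 0 := by
  obtain ⟨e, rfl⟩ : ∃ e, d = e + 1 := ⟨d - 1, by omega⟩
  obtain ⟨p0, p1, hp, hprod0⟩ := prod_aa _ (ν 0)
  obtain ⟨q0, q1, hq, hprod1⟩ := prod_aa _ (ν 1)
  rw [Nat.add_sub_cancel] at hp hq
  have key : ∀ m0 m1 : ℕ, m0 + m1 = e + 1 → Ideal.Quotient.mk (Jideal (e+1))
      ((aa u₀ 0 ^ p0 * aa u₀ 1 ^ p1) *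
        ∑ w : Fin 2, aa u₀ w * (aa w 0 ^ m0 * aa w 1 ^ m1)) = 0 := by
    intro m0 m1 hm
    rw [Fin.sum_univ_two]
    simp only [map_mul, map_add, map_pow]
    rcases (by decide : ∀ x : Fin 2, x = 0 ∨ x = 1) u₀ with h | h <;> subst h
    · have h0 := lemM0 e p0 p1 m0 m1 hp hm
      simp only [bb] at h0
      linear_combination h0
    · have h0 := lemM1 e p0 p1 m0 m1 hp hm
      simp only [bb] at h0
      linear_combination h0
  rcases (by decide : ∀ x : Fin 2, x = 0 ∨ x = 1) u₂ with h | h <;> subst h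
  · have hE : (∑ w : Fin 2, aa u₀ w * aa w 0 * ∏ j, aa u₀ (ν 0 j) * aa w (ν 1 j))
        = (aa u₀ 0 ^ p0 * aa u₀ 1 ^ p1) *
          ∑ w : Fin 2, aa u₀ w * (aa w 0 ^ (q0+1) * aa w 1 ^ q1) := by
      rw [Finset.mul_sum]
      refine Finset.sum_congr rfl fun w _ => ?_
      rw [Finset.prod_mul_distrib, hprod0 u₀, hprod1 w]
      ring
    rw [hE]
    exact key (q0+1) q1 (by omega)
  · have hE : (∑ w : Fin 2, aa u₀ w * aa w 1 * ∏ j, aa u₀ (ν 0 j) * aa w (ν 1 j))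
        = (aa u₀ 0 ^ p0 * aa u₀ 1 ^ p1) *
          ∑ w : Fin 2, aa u₀ w * (aa w 0 ^ q0 * aa w 1 ^ (q1+1)) := by
      rw [Finset.mul_sum]
      refine Finset.sum_congr rfl fun w _ => ?_
      rw [Finset.prod_mul_distrib, hprod0 u₀, hprod1 w]
      ring
    rw [hE]
    exact key q0 (q1+1) (by omega)
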